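/- Let N and K be positive integers and let A₁, …, A_K be N×N complex matrices. Suppose that for each j there exist an invertible N×N complex matrix Ω_j and a diagonal matrix 𝔞_j with real, pairwise distinct diagonal entries such that Ω_j A_j Ω_j⁻¹ = 𝔞_j. Then there exists a positive-definite Hermitian N×N matrix Θ with A_jᴴ Θ = Θ A_j for all j = 1, …, K if and only if there exist functions d₁, …, d_K : Fin N → ℝ with d_j(n) > 0 for all j, n such that the matrices Ω_jᴴ · diag(d_j) · Ω_j are all equal (i.e., Ω_jᴴ diag(d_j) Ω_j = Ω₁ᴴ diag(d₁) Ω₁ for every j). -/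

import Mathlib

open scoped ComplexOrder
open Matrix

private lemma posdef_conj_aux {N : ℕ} {M B : Matrix (Fin N) (Fin N) ℂ}
    (hM : M.PosDef) (hB : IsUnit B) : (Bᴴ * M * B).PosDef := by
  have hdet : IsUnit B.det := (Matrix.isUnit_iff_isUnit_det _).mp hB
  refine Matrix.posDef_iff_dotProduct_mulVec.mpr ⟨Matrix.isHermitian_conjTranspose_mul_mul B hM.1, fun x hx => ?_⟩
  have hBx : B *ᵥ x ≠ 0 := by
    intro h0
    apply hx
    have := congrArg (fun v => B⁻¹ *ᵥ v) h0
    simpa [Matrix.mulVec_mulVec, Matrix.nonsing_inv_mul B hdet] using this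
  have key : star x ⬝ᵥ ((Bᴴ * M * B) *ᵥ x) = star (B *ᵥ x) ⬝ᵥ (M *ᵥ (B *ᵥ x)) := by
    rw [star_mulVec, ← Matrix.dotProduct_mulVec, Matrix.mulVec_mulVec, Matrix.mulVec_mulVec,
      Matrix.mul_assoc]
  rw [key]
  exact hM.dotProduct_mulVec_pos hBx

private lemma diag_real_hermitian {N : ℕ} (v : Fin N → ℝ) :
    (Matrix.diagonal (fun n => (v n : ℂ)))ᴴ = Matrix.diagonal (fun n => (v n : ℂ)) := by
  rw [Matrix.diagonal_conjTranspose]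
  have : star (fun n => ((v n : ℂ))) = fun n => ((v n : ℂ)) :=
    funext fun n => Complex.conj_ofReal _
  rw [this]

private lemma comm_diagonal_of_injective {N : ℕ} {M : Matrix (Fin N) (Fin N) ℂ}
    {v : Fin N → ℝ} (hv : Function.Injective v)
    (hc : Matrix.diagonal (fun n => (v n : ℂ)) * M = M * Matrix.diagonal (fun n => (v n : ℂ))) :
    M = Matrix.diagonal (fun n => M n n) := by
  funext i k
  by_cases hik : i = k
  · subst hik; simp
  · have heq := congrFun (congrFun hc i) k
    rw [Matrix.diagonal_mul, Matrix.mul_diagonal] at heq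
    have hvik : (v i : ℂ) ≠ (v k : ℂ) := by
      exact_mod_cast fun hh => hik (hv (by exact_mod_cast hh))
    have hz : M i k = 0 := by
      by_contra h0
      exact hvik (mul_right_cancel₀ h0 (by linear_combination heq))
    simp [Matrix.diagonal_apply_ne _ hik, hz]

theorem multiplet_compatibility_iff_shared_rescaled_metric
    (N K : ℕ) (hN : 0 < N) (hK : 0 < K)
    (A Ω : Fin K → Matrix (Fin N) (Fin N) ℂ)
    (hΩ : ∀ j, IsUnit (Ω j)) (a : Fin K → Fin N → ℝ)
    (ha : ∀ j, Function.Injective (a j))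
    (h : ∀ j, Ω j * A j * (Ω j)⁻¹ = Matrix.diagonal fun n => (a j n : ℂ)) :
    (∃ Θ : Matrix (Fin N) (Fin N) ℂ, Θ.IsHermitian ∧ Θ.PosDef ∧
      ∀ j, (A j)ᴴ * Θ = Θ * A j) ↔
    (∃ d : Fin K → Fin N → ℝ, (∀ j n, 0 < d j n) ∧
      ∀ j, (Ω j)ᴴ * Matrix.diagonal (fun n => (d j n : ℂ)) * Ω j =
        (Ω ⟨0, hK⟩)ᴴ * Matrix.diagonal (fun n => (d ⟨0, hK⟩ n : ℂ)) * Ω ⟨0, hK⟩) := by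
  have hdet : ∀ j, IsUnit (Ω j).det := fun j => (Matrix.isUnit_iff_isUnit_det _).mp (hΩ j)
  have hA : ∀ j, A j = (Ω j)⁻¹ * Matrix.diagonal (fun n => (a j n : ℂ)) * Ω j := by
    intro j
    calc A j = (Ω j)⁻¹ * (Ω j * A j * (Ω j)⁻¹) * Ω j := by
          rw [Matrix.mul_assoc, Matrix.mul_assoc, Matrix.mul_assoc,
            Matrix.nonsing_inv_mul _ (hdet j), Matrix.mul_one, ← Matrix.mul_assoc,
            Matrix.nonsing_inv_mul _ (hdet j), Matrix.one_mul]
      _ = (Ω j)⁻¹ * Matrix.diagonal (fun n => (a j n : ℂ)) * Ω j := by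
          rw [h j, Matrix.mul_assoc, ← Matrix.mul_assoc]
  constructor
  · rintro ⟨Θ, hH, hP, hcomm⟩
    have main : ∀ j, ∃ v : Fin N → ℝ, (∀ n, 0 < v n) ∧
        Θ = (Ω j)ᴴ * Matrix.diagonal (fun n => (v n : ℂ)) * Ω j := by
      intro j
      letI : Invertible (Ω j) := (hΩ j).invertible
      set D : Matrix (Fin N) (Fin N) ℂ := Matrix.diagonal (fun n => (a j n : ℂ)) with hD
      set M : Matrix (Fin N) (Fin N) ℂ := ((Ω j)ᴴ)⁻¹ * Θ * (Ω j)⁻¹ with hMdef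
      have hMpos : M.PosDef := by
        have e : ((Ω j)⁻¹)ᴴ * Θ * (Ω j)⁻¹ = M := by
          rw [hMdef, Matrix.conjTranspose_nonsing_inv]
        rw [← e]
        exact posdef_conj_aux hP (isUnit_of_invertible _)
      have hc : D * M = M * D := by
        have hc0 := hcomm j
        rw [hA j, Matrix.conjTranspose_mul, Matrix.conjTranspose_mul, ← hD,
          diag_real_hermitian, Matrix.conjTranspose_nonsing_inv] at hc0
        have h2 := congrArg (fun X => ((Ω j)ᴴ)⁻¹ * X * (Ω j)⁻¹) hc0
        simp only [hMdef, hD] at h2 ⊢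
        simp only [Matrix.mul_assoc] at h2 ⊢
        rwa [Matrix.inv_mul_cancel_left_of_invertible, Matrix.mul_inv_of_invertible,
          Matrix.mul_one] at h2
      have hMdiag : M = Matrix.diagonal (fun n => M n n) :=
        comm_diagonal_of_injective (ha j) hc
      have hpos : ∀ n, 0 < M n n := by
        intro n
        have := hMpos
        rw [hMdiag] at this
        exact Matrix.posDef_diagonal_iff.mp this n
      refine ⟨fun n => (M n n).re, fun n => ((Complex.lt_def).mp (hpos n)).1, ?_⟩
      have hvM : (fun n => ((M n n).re : ℂ)) = fun n => M n n := by
        funext n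
        have him : (M n n).im = 0 := ((Complex.lt_def).mp (hpos n)).2.symm
        exact Complex.ext rfl (by simp [him])
      rw [hvM, ← hMdiag, hMdef]
      simp only [Matrix.mul_assoc]
      rw [Matrix.mul_inv_cancel_left_of_invertible, ← Matrix.mul_assoc,
        Matrix.nonsing_inv_mul_cancel_right _ _ (hdet j)]
    choose v hvpos hvΘ using main
    exact ⟨v, hvpos, fun j => by rw [← hvΘ j, ← hvΘ ⟨0, hK⟩]⟩
  · rintro ⟨d, hd, hdeq⟩
    refine ⟨(Ω ⟨0, hK⟩)ᴴ * Matrix.diagonal (fun n => (d ⟨0, hK⟩ n : ℂ)) * Ω ⟨0, hK⟩, ?_, ?_, ?_⟩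
    · rw [Matrix.IsHermitian, Matrix.conjTranspose_mul, Matrix.conjTranspose_mul,
        diag_real_hermitian, Matrix.conjTranspose_conjTranspose, Matrix.mul_assoc]
    · exact posdef_conj_aux
        (Matrix.PosDef.diagonal fun n => Complex.zero_lt_real.mpr (hd _ n)) (hΩ _)
    · intro j
      letI : Invertible (Ω j) := (hΩ j).invertible
      rw [← hdeq j, hA j]
      rw [Matrix.conjTranspose_mul, Matrix.conjTranspose_mul, diag_real_hermitian,
        Matrix.conjTranspose_nonsing_inv]
      simp only [Matrix.mul_assoc]
      rw [Matrix.inv_mul_cancel_left_of_invertible, Matrix.mul_inv_cancel_left_of_invertible]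
      rw [← Matrix.mul_assoc (Matrix.diagonal _), ← Matrix.mul_assoc (Matrix.diagonal _),
        Matrix.diagonal_mul_diagonal, Matrix.diagonal_mul_diagonal]
      have hcom : (fun i => ((a j i : ℂ)) * ((d j i : ℂ)))
          = (fun i => ((d j i : ℂ)) * ((a j i : ℂ))) := funext fun i => mul_comm _ _
      rw [hcom]
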